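/- Let f > 0 and let r* be the unique real number in (1 + f, ∞) with (1 + f)·ln(r*) = r* − 1 − f. Then for every real u > 1, one has (u − 1 − f)/(u · ln(u)) ≤ (1 + f)/r*, with equality if and only if u = r*. -/

import Mathlib

/-- The function `u ↦ (u - 1 - f)/(u·ln u)` on `(1,∞)` is maximized exactly at the
solution `r*` of `(1+f)·ln(r*) = r* - 1 - f`, with maximum value `(1+f)/r*`. -/
theorem stmt_13 (f rs : ℝ) (hf : 0 < f) (hrs : rs ∈ Set.Ioi (1 + f))
    (heq : (1 + f) * Real.log rs = rs - 1 - f) :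
    ∀ u : ℝ, 1 < u →
      (u - 1 - f) / (u * Real.log u) ≤ (1 + f) / rs ∧
      ((u - 1 - f) / (u * Real.log u) = (1 + f) / rs ↔ u = rs) := by
  intro u hu
  rw [Set.mem_Ioi] at hrs
  have hf1 : (0:ℝ) < 1 + f := by linarith
  have hrs0 : (0:ℝ) < rs := by linarith
  have hu0 : (0:ℝ) < u := by linarith
  have hlu : 0 < Real.log u := Real.log_pos hu
  have hul : 0 < u * Real.log u := mul_pos hu0 hlu
  have hx : (0:ℝ) < rs / u := div_pos hrs0 hu0
  have hdiv : u * (rs / u) = rs := by field_simp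
  -- main key inequality, strict when u ≠ rs
  have key : ∀ hle : Real.log (rs / u) ≤ rs / u - 1,
      rs * (u - 1 - f) ≤ (1 + f) * (u * Real.log u) := by
    intro hle
    rw [Real.log_div (ne_of_gt hrs0) (ne_of_gt hu0)] at hle
    have h1 : u * (Real.log rs - Real.log u) ≤ rs - u := by
      nlinarith [mul_le_mul_of_nonneg_left hle hu0.le]
    have h2 : u * ((1 + f) * Real.log rs) = u * (rs - 1 - f) := by rw [heq]
    nlinarith [mul_le_mul_of_nonneg_left h1 hf1.le]
  have keyle : rs * (u - 1 - f) ≤ (1 + f) * (u * Real.log u) :=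
    key (Real.log_le_sub_one_of_pos hx)
  have keylt : u ≠ rs → rs * (u - 1 - f) < (1 + f) * (u * Real.log u) := by
    intro hne
    have hne1 : rs / u ≠ 1 := by
      intro h
      apply hne
      field_simp at h
      linarith
    have hlt := Real.log_lt_sub_one_of_pos hx hne1
    rw [Real.log_div (ne_of_gt hrs0) (ne_of_gt hu0)] at hlt
    have h1 : u * (Real.log rs - Real.log u) < rs - u := by
      nlinarith [mul_lt_mul_of_pos_left hlt hu0]
    have h2 : u * ((1 + f) * Real.log rs) = u * (rs - 1 - f) := by rw [heq]
    nlinarith [mul_lt_mul_of_pos_left h1 hf1]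
  constructor
  · rw [div_le_div_iff₀ hul hrs0]
    nlinarith [keyle]
  · constructor
    · intro heqv
      by_contra hne
      rw [div_eq_div_iff (ne_of_gt hul) (ne_of_gt hrs0)] at heqv
      have := keylt hne
      nlinarith
    · intro h
      subst h
      rw [div_eq_div_iff (ne_of_gt hul) (ne_of_gt hrs0)]
      linear_combination -u * heq
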